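/- Let A, A0, B be real n×n matrices such that A0 is symmetric positive definite, the pair (A, A0) satisfies hypothesis (H0) with constants (c0, c1), and the pair (Bᵀ, A0) satisfies hypothesis (H0) with constants (β0, β1). Define Z = B A0⁻¹ Bᵀ. Then Z is symmetric positive definite and the pair (A, Z) satisfies hypothesis (H0) with constants (c0/β1², c1/β0²); that is, vᵀAv ≥ (c0/β1²)·vᵀZv for all v ∈ ℝⁿ, and wᵀAv ≤ (c1/β0²)·√(vᵀZv)·√(wᵀZw) for all v, w ∈ ℝⁿ. -/

import Mathlib

open Matrix

section Aux

variable {n : ℕ}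

private lemma dot_symm (A0 : Matrix (Fin n) (Fin n) ℝ) (hA0 : A0ᵀ = A0)
    (x y : Fin n → ℝ) : x ⬝ᵥ A0.mulVec y = y ⬝ᵥ A0.mulVec x := by
  rw [dotProduct_mulVec, ← mulVec_transpose, hA0, dotProduct_comm]

end Aux

/-- If A0 is symmetric positive definite, (A, A0) satisfies (H0) with
constants (c0, c1) and (Bᵀ, A0) satisfies (H0) with constants (β0, β1), then
Z = B A0⁻¹ Bᵀ is symmetric positive definite and (A, Z) satisfies (H0) with
constants (c0/β1², c1/β0²). -/
theorem stmt_9 {n : ℕ} (A A0 B : Matrix (Fin n) (Fin n) ℝ) (c0 c1 β0 β1 : ℝ)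
    (hc0 : 0 < c0) (hc1 : 0 < c1) (hβ0 : 0 < β0) (hβ1 : 0 < β1) (hA0 : A0.PosDef)
    (hcoerA : ∀ v : Fin n → ℝ, c0 * (v ⬝ᵥ A0.mulVec v) ≤ v ⬝ᵥ A.mulVec v)
    (hbddA : ∀ v w : Fin n → ℝ, w ⬝ᵥ A.mulVec v ≤
      c1 * Real.sqrt (v ⬝ᵥ A0.mulVec v) * Real.sqrt (w ⬝ᵥ A0.mulVec w))
    (hcoerB : ∀ v : Fin n → ℝ, β0 * (v ⬝ᵥ A0.mulVec v) ≤ v ⬝ᵥ Bᵀ.mulVec v)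
    (hbddB : ∀ v w : Fin n → ℝ, w ⬝ᵥ Bᵀ.mulVec v ≤
      β1 * Real.sqrt (v ⬝ᵥ A0.mulVec v) * Real.sqrt (w ⬝ᵥ A0.mulVec w)) :
    letI Z : Matrix (Fin n) (Fin n) ℝ := B * A0⁻¹ * Bᵀ
    Z.PosDef ∧
    (∀ v : Fin n → ℝ, (c0 / β1 ^ 2) * (v ⬝ᵥ Z.mulVec v) ≤ v ⬝ᵥ A.mulVec v) ∧
    (∀ v w : Fin n → ℝ, w ⬝ᵥ A.mulVec v ≤
      (c1 / β0 ^ 2) * Real.sqrt (v ⬝ᵥ Z.mulVec v) * Real.sqrt (w ⬝ᵥ Z.mulVec w)) := by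
  set Z : Matrix (Fin n) (Fin n) ℝ := B * A0⁻¹ * Bᵀ with hZdef
  have hA0symm : A0ᵀ = A0 := hA0.isHermitian
  have hA0nonneg : ∀ v : Fin n → ℝ, 0 ≤ v ⬝ᵥ A0.mulVec v := fun v => by
    simpa using hA0.posSemidef.dotProduct_mulVec_nonneg v
  have hA0pos : ∀ v : Fin n → ℝ, v ≠ 0 → 0 < v ⬝ᵥ A0.mulVec v := fun v hv => by
    simpa using hA0.dotProduct_mulVec_pos hv
  have hinv : A0 * A0⁻¹ = 1 := mul_nonsing_inv A0 hA0.det_pos.ne'.isUnit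
  have hinvsymm : (A0⁻¹)ᵀ = A0⁻¹ := by
    rw [transpose_nonsing_inv, hA0symm]
  -- main structural identity: vᵀ Z v = x ⬝ A0 x where x = A0⁻¹ (Bᵀ v),
  -- and A0 x = Bᵀ v.
  have key : ∀ v : Fin n → ℝ,
      A0.mulVec (A0⁻¹.mulVec (Bᵀ.mulVec v)) = Bᵀ.mulVec v := fun v => by
    rw [mulVec_mulVec, hinv, one_mulVec]
  have hZ : ∀ v : Fin n → ℝ,
      v ⬝ᵥ Z.mulVec v =
        (A0⁻¹.mulVec (Bᵀ.mulVec v)) ⬝ᵥ A0.mulVec (A0⁻¹.mulVec (Bᵀ.mulVec v)) := by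
    intro v
    rw [key]
    show v ⬝ᵥ (B * A0⁻¹ * Bᵀ).mulVec v = _
    rw [← mulVec_mulVec, ← mulVec_mulVec, dotProduct_mulVec, ← mulVec_transpose,
      dot_symm A0⁻¹ hinvsymm, dotProduct_mulVec, ← mulVec_transpose, hinvsymm]
  -- lower bound : β0^2 * vᵀ A0 v ≤ vᵀ Z v
  have hlow : ∀ v : Fin n → ℝ, β0 ^ 2 * (v ⬝ᵥ A0.mulVec v) ≤ v ⬝ᵥ Z.mulVec v := by
    intro v
    set x := A0⁻¹.mulVec (Bᵀ.mulVec v) with hx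
    have h1 : 0 ≤ (x - β0 • v) ⬝ᵥ A0.mulVec (x - β0 • v) := hA0nonneg _
    have hexp : (x - β0 • v) ⬝ᵥ A0.mulVec (x - β0 • v) =
        x ⬝ᵥ A0.mulVec x - 2 * β0 * (v ⬝ᵥ A0.mulVec x) + β0 ^ 2 * (v ⬝ᵥ A0.mulVec v) := by
      rw [sub_dotProduct, mulVec_sub, dotProduct_sub, dotProduct_sub,
        mulVec_smul, smul_dotProduct, smul_dotProduct, dotProduct_smul, dotProduct_smul,
        dot_symm A0 hA0symm v x]
      ring_nf
    have hvx : v ⬝ᵥ A0.mulVec x = v ⬝ᵥ Bᵀ.mulVec v := by rw [hx, key]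
    have hc := hcoerB v
    have hZv := hZ v
    nlinarith [hA0nonneg v]
  -- upper bound : vᵀ Z v ≤ β1^2 * vᵀ A0 v
  have hupp : ∀ v : Fin n → ℝ, v ⬝ᵥ Z.mulVec v ≤ β1 ^ 2 * (v ⬝ᵥ A0.mulVec v) := by
    intro v
    set x := A0⁻¹.mulVec (Bᵀ.mulVec v) with hx
    have hZv : v ⬝ᵥ Z.mulVec v = x ⬝ᵥ A0.mulVec x := hZ v
    have hb := hbddB v x
    have hxx : x ⬝ᵥ Bᵀ.mulVec v = x ⬝ᵥ A0.mulVec x := by rw [hx, key]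
    rw [hxx, ← hZv] at hb
    have hs : 0 ≤ v ⬝ᵥ Z.mulVec v := le_trans (mul_nonneg (sq_nonneg β0) (hA0nonneg v)) (hlow v)
    have ha : 0 ≤ v ⬝ᵥ A0.mulVec v := hA0nonneg v
    have h1 : Real.sqrt (v ⬝ᵥ Z.mulVec v) ^ 2 = v ⬝ᵥ Z.mulVec v := Real.sq_sqrt hs
    have h2 : Real.sqrt (v ⬝ᵥ A0.mulVec v) ^ 2 = v ⬝ᵥ A0.mulVec v := Real.sq_sqrt ha
    nlinarith [Real.sqrt_nonneg (v ⬝ᵥ Z.mulVec v), Real.sqrt_nonneg (v ⬝ᵥ A0.mulVec v),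
      sq_nonneg (β1 * Real.sqrt (v ⬝ᵥ A0.mulVec v) - Real.sqrt (v ⬝ᵥ Z.mulVec v))]
  refine ⟨?_, ?_, ?_⟩
  · refine posDef_iff_dotProduct_mulVec.mpr ⟨?_, ?_⟩
    · show Zᴴ = Z
      have : Zᴴ = Zᵀ := by
        simp [conjTranspose, Matrix.map_id]
        rfl
      rw [this]
      show (B * A0⁻¹ * Bᵀ)ᵀ = B * A0⁻¹ * Bᵀ
      rw [transpose_mul, transpose_mul, transpose_transpose, hinvsymm, mul_assoc]
    · intro v hv
      have h0 : 0 < v ⬝ᵥ A0.mulVec v := hA0pos v hv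
      have h1 : 0 < β0 ^ 2 * (v ⬝ᵥ A0.mulVec v) := by positivity
      simpa using lt_of_lt_of_le h1 (hlow v)
  · intro v
    calc (c0 / β1 ^ 2) * (v ⬝ᵥ Z.mulVec v)
        ≤ (c0 / β1 ^ 2) * (β1 ^ 2 * (v ⬝ᵥ A0.mulVec v)) :=
          mul_le_mul_of_nonneg_left (hupp v) (div_nonneg hc0.le (sq_nonneg β1))
      _ = c0 * (v ⬝ᵥ A0.mulVec v) := by
          rw [← mul_assoc, div_mul_cancel₀ c0 (pow_ne_zero 2 hβ1.ne')]
      _ ≤ v ⬝ᵥ A.mulVec v := hcoerA v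
  · intro v w
    have hsv : β0 * Real.sqrt (v ⬝ᵥ A0.mulVec v) ≤ Real.sqrt (v ⬝ᵥ Z.mulVec v) := by
      have h := Real.sqrt_le_sqrt (hlow v)
      rwa [Real.sqrt_mul (sq_nonneg β0), Real.sqrt_sq hβ0.le] at h
    have hsw : β0 * Real.sqrt (w ⬝ᵥ A0.mulVec w) ≤ Real.sqrt (w ⬝ᵥ Z.mulVec w) := by
      have h := Real.sqrt_le_sqrt (hlow w)
      rwa [Real.sqrt_mul (sq_nonneg β0), Real.sqrt_sq hβ0.le] at h
    have hprod : (β0 * Real.sqrt (v ⬝ᵥ A0.mulVec v)) * (β0 * Real.sqrt (w ⬝ᵥ A0.mulVec w)) ≤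
        Real.sqrt (v ⬝ᵥ Z.mulVec v) * Real.sqrt (w ⬝ᵥ Z.mulVec w) :=
      mul_le_mul hsv hsw (by positivity) (Real.sqrt_nonneg _)
    have hb0 : (0:ℝ) < β0 ^ 2 := by positivity
    calc w ⬝ᵥ A.mulVec v
        ≤ c1 * Real.sqrt (v ⬝ᵥ A0.mulVec v) * Real.sqrt (w ⬝ᵥ A0.mulVec w) := hbddA v w
      _ ≤ (c1 / β0 ^ 2) * Real.sqrt (v ⬝ᵥ Z.mulVec v) * Real.sqrt (w ⬝ᵥ Z.mulVec w) := by
          rw [div_mul_eq_mul_div, div_mul_eq_mul_div, le_div_iff₀ hb0]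
          nlinarith [mul_le_mul_of_nonneg_left hprod hc1.le]
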